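/- Let H be a finite abelian group of odd order and let G = H × ℤ₂ × ℤ₂. Suppose (A, B) is a near-factorization of G. For i, j ∈ {0, 1} let G_{i,j} = H × {i} × {j}, a_{i,j} = |A ∩ G_{i,j}| and b_{i,j} = |B ∩ G_{i,j}|. Then, as integers, (a_{0,0} − a_{0,1} + a_{1,0} − a_{1,1})·(b_{0,0} − b_{0,1} + b_{1,0} − b_{1,1}) = −1, (a_{0,0} + a_{0,1} − a_{1,0} − a_{1,1})·(b_{0,0} + b_{0,1} − b_{1,0} − b_{1,1}) = −1, and (a_{0,0} − a_{0,1} − a_{1,0} + a_{1,1})·(b_{0,0} − b_{0,1} − b_{1,0} + b_{1,1}) = −1. -/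

import Mathlib

open Finset
open scoped Pointwise

private lemma key_char {G : Type*} [AddCommGroup G] [Fintype G] [DecidableEq G]
    (A B : Finset G)
    (hcard : A.card * B.card = Fintype.card G - 1)
    (hsum : A + B = Finset.univ \ {0})
    (χ : G → ℤ) (hχ : ∀ x y : G, χ (x + y) = χ x * χ y)
    (htot : (∑ g : G, χ g) = 0) (h0 : χ 0 = 1) :
    (∑ x ∈ A, χ x) * (∑ x ∈ B, χ x) = -1 := by
  have himg : ((A ×ˢ B).image fun p : G × G => p.1 + p.2) = A + B :=
    Finset.image_add_product
  have hc : ((A ×ˢ B).image fun p : G × G => p.1 + p.2).card = (A ×ˢ B).card := by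
    rw [himg, hsum, Finset.card_product, hcard]
    rw [Finset.sdiff_singleton_eq_erase, Finset.card_erase_of_mem (Finset.mem_univ 0),
      Finset.card_univ]
  have hinj := Finset.injOn_of_card_image_eq hc
  have h1 : (∑ x ∈ A, χ x) * (∑ x ∈ B, χ x) = ∑ g ∈ A + B, χ g := by
    rw [Finset.sum_mul_sum, ← himg, Finset.sum_image (fun x hx y hy h => hinj hx hy h)]
    rw [Finset.sum_product]
    exact Finset.sum_congr rfl fun a _ => Finset.sum_congr rfl fun b _ => (hχ a b).symm
  rw [h1, hsum, Finset.sdiff_singleton_eq_erase]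
  have := Finset.sum_erase_add Finset.univ χ (Finset.mem_univ (0 : G))
  omega

private lemma sum_char {H : Type*} [AddCommGroup H] [Fintype H] [DecidableEq H]
    (A : Finset (H × ZMod 2 × ZMod 2)) (c : ZMod 2 × ZMod 2 → ℤ) :
    (∑ x ∈ A, c x.2) =
      ∑ y : ZMod 2 × ZMod 2,
        c y * ((A.filter (fun x => x.2.1 = y.1 ∧ x.2.2 = y.2)).card : ℤ) := by
  rw [← Finset.sum_fiberwise A (fun x => x.2) (fun x => c x.2)]
  refine Finset.sum_congr rfl fun y _ => ?_
  have hfil : A.filter (fun x => x.2 = y) =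
      A.filter (fun x => x.2.1 = y.1 ∧ x.2.2 = y.2) := by
    apply Finset.filter_congr
    intro x _
    simp [Prod.ext_iff]
  rw [Finset.sum_congr rfl (fun x hx => by
    rw [(Finset.mem_filter.mp hx).2]), Finset.sum_const, hfil]
  simp [mul_comm]

theorem near_factorization_H_Z2_Z2_products
    {H : Type*} [AddCommGroup H] [Fintype H] [DecidableEq H]
    (hodd : Odd (Fintype.card H))
    (A B : Finset (H × ZMod 2 × ZMod 2))
    (hcard : A.card * B.card = Fintype.card (H × ZMod 2 × ZMod 2) - 1)
    (hsum : A + B = Finset.univ \ {0}) :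
    letI a : ZMod 2 → ZMod 2 → ℤ := fun i j =>
      ((A.filter (fun x => x.2.1 = i ∧ x.2.2 = j)).card : ℤ)
    letI b : ZMod 2 → ZMod 2 → ℤ := fun i j =>
      ((B.filter (fun x => x.2.1 = i ∧ x.2.2 = j)).card : ℤ)
    (a 0 0 - a 0 1 + a 1 0 - a 1 1) * (b 0 0 - b 0 1 + b 1 0 - b 1 1) = -1 ∧
    (a 0 0 + a 0 1 - a 1 0 - a 1 1) * (b 0 0 + b 0 1 - b 1 0 - b 1 1) = -1 ∧
    (a 0 0 - a 0 1 - a 1 0 + a 1 1) * (b 0 0 - b 0 1 - b 1 0 + b 1 1) = -1 := by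
  show _ ∧ _ ∧ _
  set s : ZMod 2 → ℤ := fun i => if i = 0 then 1 else -1 with hs
  have hsadd : ∀ i j : ZMod 2, s (i + j) = s i * s j := by decide
  -- three characters
  have key : ∀ c : ZMod 2 × ZMod 2 → ℤ,
      (∀ y z : ZMod 2 × ZMod 2, c (y + z) = c y * c z) → c 0 = 1 →
      (∑ y : ZMod 2 × ZMod 2, c y) = 0 →
      (∑ y : ZMod 2 × ZMod 2,
        c y * ((A.filter (fun x => x.2.1 = y.1 ∧ x.2.2 = y.2)).card : ℤ)) *
      (∑ y : ZMod 2 × ZMod 2,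
        c y * ((B.filter (fun x => x.2.1 = y.1 ∧ x.2.2 = y.2)).card : ℤ)) = -1 := by
    intro c hc hc0 hctot
    rw [← sum_char A c, ← sum_char B c]
    refine key_char A B hcard hsum (fun x => c x.2) ?_ ?_ hc0
    · intro x y; exact hc x.2 y.2
    · rw [Fintype.sum_prod_type]
      simp [hctot]
  have expand : ∀ (S : Finset (H × ZMod 2 × ZMod 2)) (c : ZMod 2 × ZMod 2 → ℤ),
      (∑ y : ZMod 2 × ZMod 2,
        c y * ((S.filter (fun x => x.2.1 = y.1 ∧ x.2.2 = y.2)).card : ℤ)) =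
      c (0,0) * ((S.filter (fun x => x.2.1 = 0 ∧ x.2.2 = 0)).card : ℤ) +
      c (0,1) * ((S.filter (fun x => x.2.1 = 0 ∧ x.2.2 = 1)).card : ℤ) +
      c (1,0) * ((S.filter (fun x => x.2.1 = 1 ∧ x.2.2 = 0)).card : ℤ) +
      c (1,1) * ((S.filter (fun x => x.2.1 = 1 ∧ x.2.2 = 1)).card : ℤ) := by
    intro S c
    rw [Fintype.sum_prod_type]
    rw [show (Finset.univ : Finset (ZMod 2)) = {0, 1} from by decide]
    simp [Finset.sum_insert, Finset.sum_pair]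
    ring
  refine ⟨?_, ?_, ?_⟩
  · have h := key (fun y => s y.2) (fun y z => hsadd y.2 z.2) (by decide) (by decide)
    rw [expand A, expand B] at h
    simp only [hs] at h
    norm_num at h
    simpa [sub_eq_add_neg] using h
  · have h := key (fun y => s y.1) (fun y z => hsadd y.1 z.1) (by decide) (by decide)
    rw [expand A, expand B] at h
    simp only [hs] at h
    norm_num at h
    simpa [sub_eq_add_neg] using h
  · have h := key (fun y => s (y.1 + y.2)) (fun y z => by
      have : y.1 + z.1 + (y.2 + z.2) = (y.1 + y.2) + (z.1 + z.2) := by ring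
      simp only [Prod.fst_add, Prod.snd_add, this, hsadd]) (by decide) (by decide)
    rw [expand A, expand B] at h
    simp only [hs] at h
    norm_num at h
    simpa [sub_eq_add_neg, show (2 : ZMod 2) = 0 from by decide] using h
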